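/- Let ℓ be a fixed loop in a finite lattice, and say a set C of plaquettes is ℓ-connected if every connected component of C contains a plaquette sharing an edge with ℓ. Assume: (i) each edge of ℓ is contained in at most 2(d-1) plaquettes, and (ii) for any fixed plaquette, the number of connected plaquette sets of size n containing it is at most 10^{dn}. Then for every M ≥ 0, the number of ℓ-connected plaquette sets C with |C| ≤ M is at most e^{2d|ℓ|}·50^{dM}. -/

import Mathlib

open Finset
open scoped Classical


/-- A finite set C of plaquettes is connected (w.r.t. the adjacency Adj) if
any two of its elements are joined by a path inside C. -/
def ConnectedIn {P : Type*} (Adj : P → P → Prop) (C : Finset P) : Prop :=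
  ∀ p ∈ C, ∀ q ∈ C,
    Relation.ReflTransGen (fun a b => a ∈ C ∧ b ∈ C ∧ Adj a b) p q

/-- A plaquette touches the loop ℓ if it contains one of ℓ's edges. -/
def TouchesLoop {P E : Type*} (memE : P → E → Prop) (ledges : Finset E)
    (p : P) : Prop :=
  ∃ e ∈ ledges, memE p e

/-- C is ℓ-connected: every connected component of C contains a plaquette
sharing an edge with ℓ, i.e. every p ∈ C is joined inside C to some q ∈ C
touching ℓ. -/
def LConnected {P E : Type*} (Adj : P → P → Prop) (memE : P → E → Prop)
    (ledges : Finset E) (C : Finset P) : Prop :=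
  ∀ p ∈ C, ∃ q ∈ C,
    Relation.ReflTransGen (fun a b => a ∈ C ∧ b ∈ C ∧ Adj a b) p q ∧
    TouchesLoop memE ledges q

section Aux
variable {P : Type*}

abbrev Reach (Adj : P → P → Prop) (C : Finset P) (a b : P) : Prop :=
  Relation.ReflTransGen (fun x y => x ∈ C ∧ y ∈ C ∧ Adj x y) a b

noncomputable def comp (Adj : P → P → Prop) (C : Finset P) (a : P) : Finset P :=
  C.filter (Reach Adj C a)

variable {Adj : P → P → Prop} {C : Finset P} {a a' b p q : P}

lemma mem_comp : b ∈ comp Adj C a ↔ b ∈ C ∧ Reach Adj C a b := Finset.mem_filter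

lemma comp_subset : comp Adj C a ⊆ C := Finset.filter_subset _ _

lemma mem_comp_self (ha : a ∈ C) : a ∈ comp Adj C a :=
  mem_comp.2 ⟨ha, Relation.ReflTransGen.refl⟩

lemma reach_symm (hAdj : ∀ p q, Adj p q → Adj q p) (h : Reach Adj C a b) :
    Reach Adj C b a :=
  by
    induction h with
    | refl => exact Relation.ReflTransGen.refl
    | tail _ hxy ih => exact Relation.ReflTransGen.head ⟨hxy.2.1, hxy.1, hAdj _ _ hxy.2.2⟩ ih

lemma comp_eq (hAdj : ∀ p q, Adj p q → Adj q p) (hb : b ∈ comp Adj C a) :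
    comp Adj C b = comp Adj C a := by
  obtain ⟨hbC, hab⟩ := mem_comp.1 hb
  ext x
  simp only [mem_comp]
  constructor
  · rintro ⟨hx, hbx⟩; exact ⟨hx, Relation.ReflTransGen.trans hab hbx⟩
  · rintro ⟨hx, hax⟩; exact ⟨hx, Relation.ReflTransGen.trans (reach_symm hAdj hab) hax⟩

lemma comp_eq_of_not_disjoint (hAdj : ∀ p q, Adj p q → Adj q p)
    (h : ¬ Disjoint (comp Adj C a) (comp Adj C a')) :
    comp Adj C a = comp Adj C a' := by
  obtain ⟨x, hx, hx'⟩ := Finset.not_disjoint_iff.1 h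
  rw [← comp_eq hAdj hx, comp_eq hAdj hx']

lemma reach_within (hap : Reach Adj C a p) (hpq : Reach Adj C p q) :
    Relation.ReflTransGen
      (fun x y => x ∈ comp Adj C a ∧ y ∈ comp Adj C a ∧ Adj x y) p q := by
  induction hpq with
  | refl => exact Relation.ReflTransGen.refl
  | @tail b c h step ih =>
      exact ih.tail ⟨mem_comp.2 ⟨step.1, Relation.ReflTransGen.trans hap h⟩,
        mem_comp.2 ⟨step.2.1, (Relation.ReflTransGen.trans hap h).tail step⟩, step.2.2⟩

lemma connectedIn_comp (hAdj : ∀ p q, Adj p q → Adj q p) (_ha : a ∈ C) :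
    ConnectedIn Adj (comp Adj C a) := by
  intro p hp q hq
  obtain ⟨hpC, hap⟩ := mem_comp.1 hp
  obtain ⟨hqC, haq⟩ := mem_comp.1 hq
  exact reach_within hap (Relation.ReflTransGen.trans (reach_symm hAdj hap) haq)

end Aux

section Phi

variable {P E : Type*} [LinearOrder P] (Adj : P → P → Prop) (memE : P → E → Prop)
  (ledges : Finset E)

noncomputable def Phi (C : Finset P) (a : P) : Finset P :=
  if a ∈ C ∧ TouchesLoop memE ledges a ∧
      (∀ b ∈ (comp Adj C a).filter (TouchesLoop memE ledges), a ≤ b)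
  then comp Adj C a else ∅

variable {Adj memE ledges}

lemma Phi_subset {C : Finset P} {a : P} : Phi Adj memE ledges C a ⊆ C := by
  unfold Phi
  split_ifs
  · exact comp_subset
  · exact empty_subset C

lemma Phi_spec {C : Finset P} {a : P} (hne : Phi Adj memE ledges C a ≠ ∅) :
    a ∈ C ∧ TouchesLoop memE ledges a ∧
      (∀ b ∈ (comp Adj C a).filter (TouchesLoop memE ledges), a ≤ b) ∧
      Phi Adj memE ledges C a = comp Adj C a := by
  unfold Phi at hne ⊢
  split_ifs at hne ⊢ with h
  · exact ⟨h.1, h.2.1, h.2.2, rfl⟩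
  · exact absurd rfl hne

lemma Phi_disjoint (hAdj : ∀ p q, Adj p q → Adj q p) {C : Finset P} {a a' : P}
    (hne : a ≠ a') : Disjoint (Phi Adj memE ledges C a) (Phi Adj memE ledges C a') := by
  by_cases h : Phi Adj memE ledges C a = ∅
  · rw [h]; exact disjoint_empty_left _
  by_cases h' : Phi Adj memE ledges C a' = ∅
  · rw [h']; exact disjoint_empty_right _
  obtain ⟨haC, haT, hamin, haeq⟩ := Phi_spec h
  obtain ⟨ha'C, ha'T, ha'min, ha'eq⟩ := Phi_spec h'
  rw [haeq, ha'eq]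
  by_contra hdis
  have hcc : comp Adj C a = comp Adj C a' := comp_eq_of_not_disjoint hAdj hdis
  have h1 : a ≤ a' := by
    apply hamin
    rw [hcc]
    exact mem_filter.2 ⟨mem_comp_self ha'C, ha'T⟩
  have h2 : a' ≤ a := by
    apply ha'min
    rw [← hcc]
    exact mem_filter.2 ⟨mem_comp_self haC, haT⟩
  exact hne (le_antisymm h1 h2)

lemma Phi_cover [Fintype P] (hAdj : ∀ p q, Adj p q → Adj q p) {C : Finset P}
    (hC : LConnected Adj memE ledges C) :
    C = univ.biUnion (Phi Adj memE ledges C) := by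
  apply Finset.ext
  intro p
  constructor
  · intro hp
    obtain ⟨q, hqC, hpq, hq⟩ := hC p hp
    have hqA : q ∈ (comp Adj C p).filter (TouchesLoop memE ledges) :=
      mem_filter.2 ⟨mem_comp.2 ⟨hqC, hpq⟩, hq⟩
    have hTne : ((comp Adj C p).filter (TouchesLoop memE ledges)).Nonempty := ⟨q, hqA⟩
    set a := ((comp Adj C p).filter (TouchesLoop memE ledges)).min' hTne with hadef
    have haT : a ∈ (comp Adj C p).filter (TouchesLoop memE ledges) := min'_mem _ hTne
    have ha_comp : a ∈ comp Adj C p := (mem_filter.1 haT).1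
    have haC : a ∈ C := comp_subset ha_comp
    have hcompeq : comp Adj C a = comp Adj C p := comp_eq hAdj ha_comp
    have hcond : a ∈ C ∧ TouchesLoop memE ledges a ∧
        (∀ b ∈ (comp Adj C a).filter (TouchesLoop memE ledges), a ≤ b) := by
      refine ⟨haC, (mem_filter.1 haT).2, ?_⟩
      intro b hb
      rw [hcompeq] at hb
      exact min'_le _ b hb
    refine mem_biUnion.2 ⟨a, mem_univ a, ?_⟩
    have he : Phi Adj memE ledges C a = comp Adj C a := if_pos hcond
    rw [he, hcompeq]
    exact mem_comp_self hp
  · intro hp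
    obtain ⟨a, _, hpa⟩ := mem_biUnion.1 hp
    exact Phi_subset hpa

lemma Phi_sum_le [Fintype P] (hAdj : ∀ p q, Adj p q → Adj q p) {C : Finset P}
    (s : Finset P) : (∑ a ∈ s, (Phi Adj memE ledges C a).card) ≤ C.card := by
  have h0 : ∑ a ∈ s.filter (fun a => Phi Adj memE ledges C a ≠ ∅),
      (Phi Adj memE ledges C a).card = ∑ a ∈ s, (Phi Adj memE ledges C a).card := by
    apply sum_filter_of_ne
    intro a _ hcard
    exact fun h => hcard (by rw [h, card_empty])
  rw [← h0]
  have hd : ∀ a ∈ s.filter (fun a => Phi Adj memE ledges C a ≠ ∅),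
      ∀ a' ∈ s.filter (fun a => Phi Adj memE ledges C a ≠ ∅), a ≠ a' →
      Disjoint (Phi Adj memE ledges C a) (Phi Adj memE ledges C a') :=
    fun a _ a' _ hne => Phi_disjoint hAdj hne
  rw [← card_biUnion hd]
  apply card_le_card
  intro x hx
  obtain ⟨a, _, hxa⟩ := mem_biUnion.1 hx
  exact Phi_subset hxa

end Phi

noncomputable def FF {P : Type*} [Fintype P] (Adj : P → P → Prop)
    (A : Finset P) (M : ℕ) : Finset (P → Finset P) :=
  univ.filter (fun g =>
    (∀ x, x ∉ A → g x = ∅) ∧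
    (∀ a, g a = ∅ ∨ (a ∈ g a ∧ ConnectedIn Adj (g a))) ∧
    (∑ a ∈ A, (g a).card) ≤ M)

lemma mem_FF {P : Type*} [Fintype P] {Adj : P → P → Prop} {A : Finset P} {M : ℕ}
    {g : P → Finset P} :
    g ∈ FF Adj A M ↔
      (∀ x, x ∉ A → g x = ∅) ∧
      (∀ a, g a = ∅ ∨ (a ∈ g a ∧ ConnectedIn Adj (g a))) ∧
      (∑ a ∈ A, (g a).card) ≤ M := by
  simp [FF]

lemma sum_two_pow_le (n : ℕ) : ∑ j ∈ range n, 2 ^ j ≤ 2 ^ n := by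
  induction n with
  | zero => simp
  | succ n ih =>
      rw [sum_range_succ, pow_succ]
      omega

lemma count_funs {P : Type*} [Fintype P] (d : ℕ) (Adj : P → P → Prop)
    (h2 : ∀ (p₀ : P) (n : ℕ),
      ({C : Finset P | p₀ ∈ C ∧ ConnectedIn Adj C ∧ C.card = n}).ncard ≤ 10 ^ (d * n))
    (A : Finset P) (M : ℕ) :
    (FF Adj A M).card ≤ 2 ^ A.card * (2 * 10 ^ d) ^ M := by
  induction A using Finset.induction_on generalizing M with
  | empty =>
      have hsub : FF Adj ∅ M ⊆ {fun _ => ∅} := by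
        intro g hg
        have h := (mem_FF.1 hg).1
        simp only [mem_singleton]
        funext x
        exact h x (notMem_empty x)
      calc (FF Adj ∅ M).card ≤ 1 := by simpa using card_le_card hsub
        _ ≤ 2 ^ (∅ : Finset P).card * (2 * 10 ^ d) ^ M := by
            simp only [card_empty, pow_zero, one_mul]
            exact Nat.one_le_pow _ _ (by positivity)
  | @insert a A ha ih =>
      have hsub : FF Adj (insert a A) M ⊆
          (range (M + 1)).biUnion
            (fun k => (FF Adj (insert a A) M).filter fun g => (g a).card = k) := by
        intro g hg
        have hk : (g a).card ≤ M := by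
          have h := (mem_FF.1 hg).2.2
          rw [sum_insert ha] at h
          omega
        exact mem_biUnion.2 ⟨(g a).card, mem_range.2 (by omega),
          mem_filter.2 ⟨hg, rfl⟩⟩
      have h1 : (FF Adj (insert a A) M).card ≤
          ∑ k ∈ range (M + 1),
            ((FF Adj (insert a A) M).filter fun g => (g a).card = k).card :=
        (card_le_card hsub).trans card_biUnion_le
      have hterm : ∀ k ∈ range (M + 1),
          ((FF Adj (insert a A) M).filter fun g => (g a).card = k).card
            ≤ 10 ^ (d * k) * (2 ^ A.card * (2 * 10 ^ d) ^ (M - k)) := by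
        intro k hk
        obtain ⟨Vk, hVk⟩ : ∃ V : Finset (Finset P), V =
            univ.filter (fun v : Finset P =>
              (v = ∅ ∨ (a ∈ v ∧ ConnectedIn Adj v)) ∧ v.card = k) := ⟨_, rfl⟩
        have hV : Vk.card ≤ 10 ^ (d * k) := by
          rcases Nat.eq_zero_or_pos k with hk0 | hkpos
          · subst hk0
            have : Vk ⊆ {∅} := by
              intro v hv
              simp only [hVk, mem_filter] at hv
              simp [Finset.card_eq_zero.1 hv.2.2]
            calc Vk.card ≤ 1 := by simpa using card_le_card this
              _ ≤ 10 ^ (d * 0) := by simp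
          · have hsubV : (↑Vk : Set (Finset P)) ⊆
                {C : Finset P | a ∈ C ∧ ConnectedIn Adj C ∧ C.card = k} := by
              intro v hv
              simp only [hVk, coe_filter, Set.mem_setOf_eq, mem_univ, true_and] at hv
              obtain ⟨hd2, hcard⟩ := hv
              rcases hd2 with h0 | ⟨hav, hconn⟩
              · exfalso
                rw [h0] at hcard
                simp only [card_empty] at hcard
                exact hkpos.ne' hcard.symm
              · exact ⟨hav, hconn, hcard⟩
            calc Vk.card = (↑Vk : Set (Finset P)).ncard := (Set.ncard_coe_finset _).symm
              _ ≤ _ := Set.ncard_le_ncard hsubV (Set.toFinite _)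
              _ ≤ 10 ^ (d * k) := h2 a k
        have hinj : ((FF Adj (insert a A) M).filter fun g => (g a).card = k).card
            ≤ (Vk ×ˢ FF Adj A (M - k)).card := by
          apply card_le_card_of_injOn (fun g => (g a, Function.update g a ∅))
          · intro g hg
            dsimp only
            rw [mem_coe, mem_filter] at hg
            rw [mem_coe]
            obtain ⟨hgF, hgk⟩ := hg
            obtain ⟨H1, H2, H3⟩ := mem_FF.1 hgF
            rw [sum_insert ha] at H3
            refine mem_product.2 ⟨?_, ?_⟩
            · show g a ∈ Vk
              simp only [hVk, mem_filter, mem_univ, true_and]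
              exact ⟨H2 a, hgk⟩
            · show Function.update g a ∅ ∈ FF Adj A (M - k)
              rw [mem_FF]
              refine ⟨?_, ?_, ?_⟩
              · intro x hx
                by_cases hxa : x = a
                · subst hxa; simp
                · rw [Function.update_of_ne hxa]
                  exact H1 x (by simp [hxa, hx])
              · intro b
                by_cases hba : b = a
                · subst hba; simp
                · rw [Function.update_of_ne hba]; exact H2 b
              · have hsum : ∑ b ∈ A, ((Function.update g a ∅ : P → Finset P) b).card
                    = ∑ b ∈ A, (g b).card := by
                  apply sum_congr rfl
                  intro b hb
                  rw [Function.update_of_ne (ne_of_mem_of_not_mem hb ha)]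
                rw [hsum]
                refine Nat.le_sub_of_add_le ?_
                rw [add_comm, ← hgk]
                exact H3
          · intro g1 h1' g2 h2' heq
            simp only [Prod.mk.injEq] at heq
            funext x
            by_cases hxa : x = a
            · subst hxa; exact heq.1
            · have := congrFun heq.2 x
              rwa [Function.update_of_ne hxa, Function.update_of_ne hxa] at this
        calc ((FF Adj (insert a A) M).filter fun g => (g a).card = k).card
            ≤ (Vk ×ˢ FF Adj A (M - k)).card := hinj
          _ = Vk.card * (FF Adj A (M - k)).card := card_product _ _
          _ ≤ 10 ^ (d * k) * (2 ^ A.card * (2 * 10 ^ d) ^ (M - k)) :=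
              Nat.mul_le_mul hV (ih (M - k))
      have h2' : ∀ k ∈ range (M + 1),
          10 ^ (d * k) * (2 ^ A.card * (2 * 10 ^ d) ^ (M - k))
            = 2 ^ A.card * (2 ^ (M - k) * 10 ^ (d * M)) := by
        intro k hk
        have hkM : k ≤ M := by simpa using Nat.lt_succ_iff.1 (mem_range.1 hk)
        have e1 : d * k + d * (M - k) = d * M := by
          rw [← Nat.mul_add, Nat.add_sub_cancel' hkM]
        rw [mul_pow, ← pow_mul]
        calc 10 ^ (d * k) * (2 ^ A.card * (2 ^ (M - k) * 10 ^ (d * (M - k))))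
            = 2 ^ A.card * (2 ^ (M - k) * (10 ^ (d * k) * 10 ^ (d * (M - k)))) := by ring
          _ = 2 ^ A.card * (2 ^ (M - k) * 10 ^ (d * M)) := by rw [← pow_add, e1]
      calc (FF Adj (insert a A) M).card
          ≤ ∑ k ∈ range (M + 1), 10 ^ (d * k) * (2 ^ A.card * (2 * 10 ^ d) ^ (M - k)) :=
            h1.trans (sum_le_sum hterm)
        _ = 2 ^ A.card * ((∑ k ∈ range (M + 1), 2 ^ (M - k)) * 10 ^ (d * M)) := by
            rw [sum_congr rfl h2', ← mul_sum, ← sum_mul]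
        _ ≤ 2 ^ A.card * (2 ^ (M + 1) * 10 ^ (d * M)) := by
            have : ∑ k ∈ range (M + 1), 2 ^ (M - k) ≤ 2 ^ (M + 1) := by
              have e := Finset.sum_range_reflect (fun j => 2 ^ j) (M + 1)
              simp only [Nat.succ_sub_one] at e
              exact e.trans_le (sum_two_pow_le (M + 1))
            exact Nat.mul_le_mul_left _ (Nat.mul_le_mul_right _ this)
        _ = 2 ^ (insert a A).card * (2 * 10 ^ d) ^ M := by
            rw [card_insert_of_notMem ha, mul_pow, ← pow_mul]
            ring

/-- Counting ℓ-connected plaquette sets: if each edge of ℓ lies in at most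
2(d-1) plaquettes, and for each fixed plaquette the number of connected
plaquette sets of size n containing it is at most 10^{dn}, then for every
M ≥ 0 the number of ℓ-connected plaquette sets of size at most M is at most
e^{2d|ℓ|}·50^{dM}. -/
theorem stmt_18 {P E : Type*} [Fintype P] (d : ℕ) (hd : 2 ≤ d)
    (Adj : P → P → Prop) (hAdj : ∀ p q, Adj p q → Adj q p)
    (memE : P → E → Prop) (ledges : Finset E)
    (h1 : ∀ e ∈ ledges, ({p : P | memE p e}).ncard ≤ 2 * (d - 1))
    (h2 : ∀ (p₀ : P) (n : ℕ),
      ({C : Finset P | p₀ ∈ C ∧ ConnectedIn Adj C ∧ C.card = n}).ncard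
        ≤ 10 ^ (d * n))
    (M : ℕ) :
    (({C : Finset P | LConnected Adj memE ledges C ∧ C.card ≤ M}).ncard : ℝ)
      ≤ Real.exp (2 * d * ledges.card) * 50 ^ (d * M) := by
  classical
  letI : LinearOrder P := LinearOrder.lift' (Fintype.equivFin P) (Fintype.equivFin P).injective
  set A : Finset P := univ.filter (TouchesLoop memE ledges) with hAdef
  set S : Set (Finset P) :=
    {C : Finset P | LConnected Adj memE ledges C ∧ C.card ≤ M} with hSdef
  -- bound on the number of anchors
  have hAcard : A.card ≤ 2 * (d - 1) * ledges.card := by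
    have hsub : A ⊆ ledges.biUnion (fun e => univ.filter (fun p => memE p e)) := by
      intro p hp
      rw [hAdef, mem_filter] at hp
      obtain ⟨e, he, hpe⟩ := hp.2
      exact mem_biUnion.2 ⟨e, he, mem_filter.2 ⟨mem_univ _, hpe⟩⟩
    calc A.card ≤ ∑ e ∈ ledges, (univ.filter (fun p => memE p e)).card :=
          (card_le_card hsub).trans card_biUnion_le
      _ ≤ ∑ _e ∈ ledges, 2 * (d - 1) := by
          apply sum_le_sum
          intro e he
          have heq : {p : P | memE p e} = ↑(univ.filter (fun p => memE p e)) := by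
            ext p; simp
          have := h1 e he
          rw [heq, Set.ncard_coe_finset] at this
          exact this
      _ = ledges.card * (2 * (d - 1)) := by rw [sum_const, smul_eq_mul]
      _ = 2 * (d - 1) * ledges.card := mul_comm _ _
  -- Phi maps S into FF Adj A M
  have hmaps : ∀ C ∈ S, Phi Adj memE ledges C ∈ FF Adj A M := by
    intro C hC
    obtain ⟨hCl, hCm⟩ := hC
    rw [mem_FF]
    refine ⟨?_, ?_, ?_⟩
    · intro x hx
      have hxT : ¬ TouchesLoop memE ledges x := by
        intro h
        exact hx (by rw [hAdef]; exact mem_filter.2 ⟨mem_univ _, h⟩)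
      exact if_neg (fun hcond => hxT hcond.2.1)
    · intro a
      by_cases h : Phi Adj memE ledges C a = ∅
      · exact Or.inl h
      · obtain ⟨haC, _, _, heq⟩ := Phi_spec h
        refine Or.inr ⟨?_, ?_⟩
        · rw [heq]; exact mem_comp_self haC
        · rw [heq]; exact connectedIn_comp hAdj haC
    · exact (Phi_sum_le hAdj A).trans hCm
  -- Phi is injective on S
  have hinj : Set.InjOn (Phi Adj memE ledges) S := by
    intro C hC C' hC' h
    rw [Phi_cover hAdj hC.1, Phi_cover hAdj hC'.1, h]
  -- counting
  have hS : S.ncard ≤ 2 ^ A.card * (2 * 10 ^ d) ^ M := by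
    calc S.ncard = (Phi Adj memE ledges '' S).ncard :=
          (Set.ncard_image_of_injOn hinj).symm
      _ ≤ ((FF Adj A M : Finset (P → Finset P)) : Set (P → Finset P)).ncard := by
          apply Set.ncard_le_ncard ?_ (Set.toFinite _)
          rintro g ⟨C, hC, rfl⟩
          exact hmaps C hC
      _ = (FF Adj A M).card := Set.ncard_coe_finset _
      _ ≤ 2 ^ A.card * (2 * 10 ^ d) ^ M := count_funs d Adj h2 A M
  -- pass to the reals
  have hd1 : 1 ≤ d := le_trans (by norm_num) hd
  calc (S.ncard : ℝ)
      ≤ ((2 ^ A.card * (2 * 10 ^ d) ^ M : ℕ) : ℝ) := by exact_mod_cast hS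
    _ = (2 : ℝ) ^ A.card * (2 * 10 ^ d) ^ M := by push_cast; ring
    _ ≤ Real.exp (2 * d * ledges.card) * 50 ^ (d * M) := by
        have hterm1 : (2 : ℝ) ^ A.card ≤ Real.exp (2 * d * ledges.card) := by
          have e2 : (2 : ℝ) ≤ Real.exp 1 := by
            have := Real.add_one_le_exp (1 : ℝ)
            linarith
          calc (2 : ℝ) ^ A.card ≤ (Real.exp 1) ^ A.card :=
                pow_le_pow_left₀ (by norm_num) e2 _
            _ = Real.exp A.card := by rw [Real.exp_one_pow]
            _ ≤ Real.exp (2 * d * ledges.card) := by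
                apply Real.exp_le_exp.2
                have : (A.card : ℝ) ≤ 2 * (d - 1) * ledges.card := by exact_mod_cast hAcard
                have hle : (2 * (d - 1) * ledges.card : ℕ) ≤ 2 * d * ledges.card :=
                  Nat.mul_le_mul_right _ (Nat.mul_le_mul_left _ (Nat.sub_le d 1))
                calc (A.card : ℝ) ≤ ((2 * (d - 1) * ledges.card : ℕ) : ℝ) := by
                      exact_mod_cast hAcard
                  _ ≤ ((2 * d * ledges.card : ℕ) : ℝ) := by exact_mod_cast hle
                  _ = 2 * d * ledges.card := by push_cast; ring
        have hterm2 : ((2 : ℝ) * 10 ^ d) ^ M ≤ 50 ^ (d * M) := by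
          have hb : (2 : ℝ) * 10 ^ d ≤ 50 ^ d := by
            have h5 : (5 : ℝ) ≤ 5 ^ d := by
              calc (5 : ℝ) = 5 ^ 1 := (pow_one 5).symm
                _ ≤ 5 ^ d := pow_le_pow_right₀ (by norm_num) hd1
            calc (2 : ℝ) * 10 ^ d ≤ 5 ^ d * 10 ^ d := by nlinarith [pow_pos (by norm_num : (0:ℝ) < 10) d]
              _ = 50 ^ d := by rw [← mul_pow]; norm_num
          calc ((2 : ℝ) * 10 ^ d) ^ M ≤ (50 ^ d) ^ M :=
              pow_le_pow_left₀ (by positivity) hb M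
            _ = 50 ^ (d * M) := by rw [← pow_mul]
        have h50 : (0 : ℝ) ≤ 50 ^ (d * M) := by positivity
        exact mul_le_mul hterm1 hterm2 (by positivity) (le_of_lt (Real.exp_pos _))
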